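/- arXiv:2012.02847 — 4 statements merged into one kernel-verified Lean document; each statement's English description precedes it below -/
import Mathlib

section
/- Let N, n, m be positive reals with 1 ≤ n ≤ N, 1 < m < N, n < m, let 0 ≤ p ≤ 1, 0 ≤ q ≤ p, α ∈ [0,1]. Define p' = 1 − (1−pα)^n and q' = 1 − (1−qα)^n (n a positive integer). Then (m−1)(p' − pα) + (N−m)(q' − qα) + (n−1)(1 − p') ≥ 0. -/
theorem lower_bound_case2 (N m p q α : ℝ) (n : ℕ)
    (hn1 : 1 ≤ (n : ℝ)) (hnN : (n : ℝ) ≤ N)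
    (hm1 : 1 < m) (hmN : m < N) (hnm : (n : ℝ) < m)
    (hp0 : 0 ≤ p) (hp1 : p ≤ 1) (hq0 : 0 ≤ q) (hqp : q ≤ p)
    (hα0 : 0 ≤ α) (hα1 : α ≤ 1) :
    0 ≤ (m - 1) * ((1 - (1 - p * α) ^ n) - p * α) +
        (N - m) * ((1 - (1 - q * α) ^ n) - q * α) +
        ((n : ℝ) - 1) * (1 - (1 - (1 - p * α) ^ n)) := by
  have hn0 : n ≠ 0 := by
    rintro rfl; norm_num at hn1
  have hpa0 : 0 ≤ p * α := mul_nonneg hp0 hα0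
  have hpa1 : p * α ≤ 1 := mul_le_one₀ hp1 hα0 hα1
  have hqa0 : 0 ≤ q * α := mul_nonneg hq0 hα0
  have hqa1 : q * α ≤ 1 := mul_le_one₀ (hqp.trans hp1) hα0 hα1
  have ha0 : 0 ≤ 1 - p * α := by linarith
  have ha1 : 1 - p * α ≤ 1 := by linarith
  have hb0 : 0 ≤ 1 - q * α := by linarith
  have hb1 : 1 - q * α ≤ 1 := by linarith
  have h1 : (1 - p * α) ^ n ≤ 1 - p * α := pow_le_of_le_one ha0 ha1 hn0
  have h2 : (1 - q * α) ^ n ≤ 1 - q * α := pow_le_of_le_one hb0 hb1 hn0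
  have h3 : 0 ≤ (1 - p * α) ^ n := pow_nonneg ha0 n
  have t1 : 0 ≤ (m - 1) * ((1 - (1 - p * α) ^ n) - p * α) :=
    mul_nonneg (by linarith) (by linarith)
  have t2 : 0 ≤ (N - m) * ((1 - (1 - q * α) ^ n) - q * α) :=
    mul_nonneg (by linarith) (by linarith)
  have t3 : 0 ≤ ((n : ℝ) - 1) * (1 - (1 - (1 - p * α) ^ n)) :=
    mul_nonneg (by linarith) (by linarith)
  linarith
end

section
/- Let N, n, m be positive reals with m ≤ n ≤ N, 1 < m < N, let 0 ≤ q ≤ 1, α ∈ [0,1], and let q' = 1 − (1−qα)^n for a positive integer n. Then (N−m)·(q' − qα) + (n−m)·(1 − q') ≥ 0. -/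
theorem lower_bound_case3 (N m q α : ℝ) (n : ℕ)
    (hmn : m ≤ (n : ℝ)) (hnN : (n : ℝ) ≤ N)
    (hm1 : 1 < m) (hmN : m < N)
    (hq0 : 0 ≤ q) (hq1 : q ≤ 1)
    (hα0 : 0 ≤ α) (hα1 : α ≤ 1) (hn : 0 < n) :
    0 ≤ (N - m) * ((1 - (1 - q * α) ^ n) - q * α) +
        ((n : ℝ) - m) * (1 - (1 - (1 - q * α) ^ n)) := by
  have hx0 : 0 ≤ q * α := mul_nonneg hq0 hα0
  have hx1 : q * α ≤ 1 := mul_le_one₀ hq1 hα0 hα1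
  have h1 : 0 ≤ 1 - q * α := by linarith
  have hpow : (1 - q * α) ^ n ≤ 1 - q * α := pow_le_of_le_one h1 (by linarith) hn.ne'
  have hpow0 : 0 ≤ (1 - q * α) ^ n := pow_nonneg h1 n
  have t1 : 0 ≤ (N - m) * ((1 - (1 - q * α) ^ n) - q * α) :=
    mul_nonneg (by linarith) (by linarith)
  have t2 : 0 ≤ ((n : ℝ) - m) * (1 - (1 - (1 - q * α) ^ n)) :=
    mul_nonneg (by linarith) (by linarith)
  linarith
end

section
/- Let N > n ≥ m > 1, p > 0, v > 0, with (m−1)p + (N−m)q > 0 and q·(N−1)·v ≤ ((m−1)p + (N−m)q) for all q in [0,p] (i.e., q·α(q) ≤ 1). Then the derivative with respect to q of g(q) = 1 − (1 − q·α(q))^n, where α(q) = (N−1)v/((m−1)p + (N−m)q), equals n·v·p·(N−1)·(m−1)·(1 − q·α(q))^(n−1) / ((m−1)p + (N−m)q)^2, which is nonnegative. -/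
theorem deriv_qprime (N m p v q : ℝ) (n : ℕ)
    (hn : 1 ≤ n) (hm1 : 1 < m) (hmn : m ≤ (n : ℝ)) (hnN : (n : ℝ) < N)
    (hp : 0 < p) (hv : 0 < v) (hq0 : 0 ≤ q) (hqp : q ≤ p)
    (hden : 0 < (m - 1) * p + (N - m) * q)
    (hqα : ∀ q' ∈ Set.Icc (0 : ℝ) p,
      q' * ((N - 1) * v) ≤ (m - 1) * p + (N - m) * q') :
    HasDerivAt
      (fun x : ℝ => 1 - (1 - x * ((N - 1) * v / ((m - 1) * p + (N - m) * x))) ^ n)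
      ((n : ℝ) * v * p * (N - 1) * (m - 1) *
          (1 - q * ((N - 1) * v / ((m - 1) * p + (N - m) * q))) ^ (n - 1) /
        ((m - 1) * p + (N - m) * q) ^ 2) q ∧
    0 ≤ (n : ℝ) * v * p * (N - 1) * (m - 1) *
          (1 - q * ((N - 1) * v / ((m - 1) * p + (N - m) * q))) ^ (n - 1) /
        ((m - 1) * p + (N - m) * q) ^ 2 := by
  set c : ℝ := (N - 1) * v with hc
  set d : ℝ := (m - 1) * p + (N - m) * q with hd
  have hne : d ≠ 0 := ne_of_gt hden
  -- derivative of u(x) = x*c / (a + b x)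
  have hnum : HasDerivAt (fun x : ℝ => x * c) c q := by
    simpa using (hasDerivAt_id q).mul_const c
  have hdenom : HasDerivAt (fun x : ℝ => (m - 1) * p + (N - m) * x) (N - m) q := by
    simpa using ((hasDerivAt_id q).const_mul (N - m)).const_add ((m - 1) * p)
  have hu : HasDerivAt (fun x : ℝ => x * c / ((m - 1) * p + (N - m) * x))
      ((c * d - q * c * (N - m)) / d ^ 2) q := by
    exact hnum.div hdenom hne
  have hu' : HasDerivAt (fun x : ℝ => x * (c / ((m - 1) * p + (N - m) * x)))
      ((c * d - q * c * (N - m)) / d ^ 2) q := by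
    convert hu using 2 with x
    ring
  have h1 : HasDerivAt (fun x : ℝ => 1 - x * (c / ((m - 1) * p + (N - m) * x)))
      (-((c * d - q * c * (N - m)) / d ^ 2)) q := hu'.const_sub 1
  have h2 := (h1.pow n).const_sub 1
  have key : -((n : ℝ) * (1 - q * (c / d)) ^ (n - 1) *
      -((c * d - q * c * (N - m)) / d ^ 2)) =
      (n : ℝ) * v * p * (N - 1) * (m - 1) * (1 - q * (c / d)) ^ (n - 1) / d ^ 2 := by
    have : c * d - q * c * (N - m) = c * ((m - 1) * p) := by rw [hd]; ring
    rw [this, hc]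
    field_simp
  constructor
  · rw [← key]; exact h2
  · have hN1 : (0 : ℝ) < N - 1 := by
      have : (1 : ℝ) ≤ (n : ℝ) := by exact_mod_cast hn
      linarith
    have hm1' : (0 : ℝ) < m - 1 := by linarith
    have hb : 0 ≤ 1 - q * (c / d) := by
      have h := hqα q ⟨hq0, hqp⟩
      have : q * c ≤ d := h
      have hqc : q * (c / d) ≤ 1 := by
        rw [mul_div_assoc'] at *
        exact (div_le_one hden).2 this
      linarith
    have : 0 ≤ (1 - q * (c / d)) ^ (n - 1) := pow_nonneg hb _
    positivity
end

section
/- Let N ≥ 1, n ≥ 1, v ∈ [0,1]. Then T_LB := N/n + n·max(1, (1 + (N−1)v)/n) ≤ N/n + n·[1 + (N/n − 1)·(1 − (1−v)^n)] =: E[T_D], for n a positive integer with n ≤ N. -/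
theorem tlb_le_dorfman (N v : ℝ) (n : ℕ)
    (hN : 1 ≤ N) (hn : 1 ≤ n) (hnN : (n : ℝ) ≤ N)
    (hv0 : 0 ≤ v) (hv1 : v ≤ 1) :
    N / n + n * max 1 ((1 + (N - 1) * v) / n) ≤
      N / n + n * (1 + (N / n - 1) * (1 - (1 - v) ^ n)) := by
  have hn' : (1:ℝ) ≤ (n:ℝ) := by exact_mod_cast hn
  have hnpos : (0:ℝ) < (n:ℝ) := lt_of_lt_of_le one_pos hn'
  have hpow : (1 - v) ^ n ≤ 1 - v :=
    pow_le_of_le_one (by linarith) (by linarith) (by omega)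
  have hvle : v ≤ 1 - (1 - v) ^ n := by linarith
  have hpow0 : 0 ≤ 1 - (1 - v) ^ n := by
    have : (1 - v) ^ n ≤ 1 := pow_le_one₀ (by linarith) (by linarith)
    linarith
  have hNn : 0 ≤ N / n - 1 := by
    rw [sub_nonneg, le_div_iff₀ hnpos]; linarith
  have key : max 1 ((1 + (N - 1) * v) / n) ≤ 1 + (N / n - 1) * (1 - (1 - v) ^ n) := by
    apply max_le
    · nlinarith
    · rw [div_le_iff₀ hnpos]
      have h1 : 1 + (N / n - 1) * v ≤ 1 + (N / n - 1) * (1 - (1 - v) ^ n) :=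
        by nlinarith
      have h2 : (1 + (N / n - 1) * v) * n = n + (N - n) * v := by
        field_simp
      nlinarith
  gcongr
end
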